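/- Let G be a graph whose vertex set is the disjoint union of d copies of the 5-cycle C_5 (with vertices v_{i,1},...,v_{i,5} in cyclic order for i = 1,...,d), together with additional edges making {v_{1,1},...,v_{d,1}} a clique. Assign weight 2 to each vertex v_{i,1} and weight 1 to all other vertices. Then the maximum weight of an independent set in G is 2d + 1. -/

import Mathlib

/-- The graph `𝒢_d`: `d` disjoint copies of the 5-cycle `C_5` (vertices `(i, j)`,
`j : ZMod 5`, with `j = 0` corresponding to `v_{i,1}`), together with extra edges
making the first vertices `{(i, 0)}` of all copies a clique. -/
def Gd (d : ℕ) : SimpleGraph (Fin d × ZMod 5) where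
  Adj p q := (p.1 = q.1 ∧ (p.2 - q.2 = 1 ∨ q.2 - p.2 = 1)) ∨
    (p.1 ≠ q.1 ∧ p.2 = 0 ∧ q.2 = 0)
  symm := by
    constructor
    intro p q h
    rcases h with ⟨h1, h2⟩ | ⟨h1, h2, h3⟩
    · exact Or.inl ⟨h1.symm, h2.symm⟩
    · exact Or.inr ⟨h1.symm, h3, h2⟩
  loopless := by
    constructor
    intro p h
    rcases h with ⟨_, h2 | h2⟩ | ⟨h1, _⟩
    · rw [sub_self] at h2; exact absurd h2 (by decide)
    · rw [sub_self] at h2; exact absurd h2 (by decide)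
    · exact h1 rfl

/-- Weights: `2` on each first vertex `v_{i,1}` (i.e. `(i,0)`), `1` elsewhere. -/
def GdWeight (d : ℕ) (p : Fin d × ZMod 5) : ℕ := if p.2 = 0 then 2 else 1

lemma c5_bound : ∀ t : Finset (ZMod 5),
    (∀ a ∈ t, ∀ b ∈ t, a ≠ b → ¬ (a - b = 1 ∨ b - a = 1)) →
    (∑ j ∈ t, (if j = 0 then 2 else 1 : ℕ)) ≤ 3 ∧
    ((0 : ZMod 5) ∉ t → (∑ j ∈ t, (if j = 0 then 2 else 1 : ℕ)) ≤ 2) := by decide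

lemma aux1 : (∑ x : ZMod 5, (if x = 0 ∨ x = 2 then (if x = 0 then 2 else 1 : ℕ) else 0)) = 3 := by
  decide

lemma aux2 : (∑ x : ZMod 5, (if x = 1 ∨ x = 3 then (if x = 0 then 2 else 1 : ℕ) else 0)) = 2 := by
  decide

lemma sum_if_eq (d : ℕ) (i0 : Fin d) :
    (∑ i : Fin d, (if i = i0 then 3 else 2)) = 2 * d + 1 := by
  have : ∀ i : Fin d, (if i = i0 then 3 else 2) = 2 + (if i = i0 then 1 else 0) := by
    intro i; by_cases h : i = i0 <;> simp [h]
  simp only [this, Finset.sum_add_distrib, Finset.sum_const, Finset.card_univ,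
    Fintype.card_fin, smul_eq_mul, mul_comm, Finset.sum_ite_eq' Finset.univ i0 (fun _ => 1),
    Finset.mem_univ, if_true]

/-- The maximum weight of an independent set of `(𝒢_d, w)` is `2d + 1`. -/
theorem stmt_5 (d : ℕ) (hd : 3 ≤ d) :
    IsGreatest {t : ℕ | ∃ s : Finset (Fin d × ZMod 5),
        (s : Set (Fin d × ZMod 5)).Pairwise (fun p q => ¬ (Gd d).Adj p q) ∧
        t = ∑ p ∈ s, GdWeight d p}
      (2 * d + 1) := by
  haveI : NeZero d := ⟨by omega⟩
  constructor
  · -- membership: explicit independent set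
    set i0 : Fin d := ⟨0, by omega⟩ with hi0
    refine ⟨Finset.univ.filter (fun p => (p.1 = i0 ∧ (p.2 = 0 ∨ p.2 = 2)) ∨
      (p.1 ≠ i0 ∧ (p.2 = 1 ∨ p.2 = 3))), ?_, ?_⟩
    · intro p hp q hq hpq hadj
      simp only [Finset.coe_filter, Set.mem_setOf_eq, Finset.mem_univ, true_and] at hp hq
      rcases hadj with ⟨h1, h2⟩ | ⟨h1, h2, h3⟩
      · rcases hp with ⟨hpi, hp2⟩ | ⟨hpi, hp2⟩ <;>
          rcases hq with ⟨hqi, hq2⟩ | ⟨hqi, hq2⟩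
        · rcases hp2 with hp2 | hp2 <;> rcases hq2 with hq2 | hq2 <;>
            rw [hp2, hq2] at h2 <;> revert h2 <;> decide
        · exact hqi (h1 ▸ hpi)
        · exact hpi (h1.symm ▸ hqi)
        · rcases hp2 with hp2 | hp2 <;> rcases hq2 with hq2 | hq2 <;>
            rw [hp2, hq2] at h2 <;> revert h2 <;> decide
      · rcases hp with ⟨hpi, hp2⟩ | ⟨hpi, hp2⟩
        · rcases hq with ⟨hqi, hq2⟩ | ⟨hqi, hq2⟩
          · exact h1 (hpi.trans hqi.symm)
          · rcases hq2 with hq2 | hq2 <;> rw [hq2] at h3 <;> revert h3 <;> decide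
        · rcases hp2 with hp2 | hp2 <;> rw [hp2] at h2 <;> revert h2 <;> decide
    · rw [Finset.sum_filter, Fintype.sum_prod_type]
      have key : ∀ i : Fin d, (∑ j : ZMod 5,
          if (i = i0 ∧ (j = 0 ∨ j = 2)) ∨ (i ≠ i0 ∧ (j = 1 ∨ j = 3)) then
            GdWeight d (i, j) else 0) = if i = i0 then 3 else 2 := by
        intro i
        by_cases h : i = i0 <;> simp only [h, GdWeight, ne_eq, not_true_eq_false,
          false_and, or_false, true_and, not_false_eq_true, false_or, and_self,
          if_true, if_false, true_or]
        · exact aux1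
        · exact aux2
      rw [Finset.sum_congr rfl (fun i _ => key i), sum_if_eq]
  · -- upper bound
    rintro t ⟨s, hind, rfl⟩
    rw [← Finset.sum_fiberwise s (fun p => p.1) (GdWeight d)]
    have hcopy : ∀ i : Fin d,
        (∑ p ∈ s.filter (fun p => p.1 = i), GdWeight d p) ≤ 3 ∧
        (((i, (0 : ZMod 5)) ∉ s) →
          (∑ p ∈ s.filter (fun p => p.1 = i), GdWeight d p) ≤ 2) := by
      intro i
      set ti := (s.filter (fun p => p.1 = i)).image Prod.snd with hti
      have hinj : ∀ p ∈ s.filter (fun p => p.1 = i), ∀ q ∈ s.filter (fun p => p.1 = i),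
          p.2 = q.2 → p = q := by
        intro p hp q hq h
        simp only [Finset.mem_filter] at hp hq
        exact Prod.ext (hp.2.trans hq.2.symm) h
      have hsum : (∑ p ∈ s.filter (fun p => p.1 = i), GdWeight d p)
          = ∑ j ∈ ti, (if j = 0 then 2 else 1 : ℕ) := by
        rw [hti, Finset.sum_image hinj]
        rfl
      have hcond : ∀ a ∈ ti, ∀ b ∈ ti, a ≠ b → ¬ (a - b = 1 ∨ b - a = 1) := by
        intro a ha b hb hab habs
        simp only [hti, Finset.mem_image, Finset.mem_filter] at ha hb
        obtain ⟨p, ⟨hps, hpi⟩, hpa⟩ := ha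
        obtain ⟨q, ⟨hqs, hqi⟩, hqb⟩ := hb
        have hpq : p ≠ q := fun h => hab (hpa ▸ hqb ▸ h ▸ rfl)
        exact hind hps hqs hpq (Or.inl ⟨hpi.trans hqi.symm, hpa ▸ hqb ▸ habs⟩)
      have h0 : (i, (0 : ZMod 5)) ∉ s → (0 : ZMod 5) ∉ ti := by
        intro hnot h0mem
        simp only [hti, Finset.mem_image, Finset.mem_filter] at h0mem
        obtain ⟨p, ⟨hps, hpi⟩, hp0⟩ := h0mem
        have hpe : p = (i, 0) := Prod.ext hpi hp0
        exact hnot (hpe ▸ hps)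
      obtain ⟨h3, h2⟩ := c5_bound ti hcond
      exact ⟨hsum ▸ h3, fun hn => hsum ▸ h2 (h0 hn)⟩
    by_cases hex : ∃ i : Fin d, ((i, (0 : ZMod 5)) ∈ s)
    · obtain ⟨i0, hi0⟩ := hex
      have huniq : ∀ i : Fin d, i ≠ i0 → ((i, (0 : ZMod 5)) ∉ s) := by
        intro i hne hmem
        exact hind hmem hi0 (by simp [Prod.ext_iff, hne]) (Or.inr ⟨hne, rfl, rfl⟩)
      calc (∑ i : Fin d, ∑ p ∈ s.filter (fun p => p.1 = i), GdWeight d p)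
          ≤ ∑ i : Fin d, (if i = i0 then 3 else 2) := by
            apply Finset.sum_le_sum
            intro i _
            by_cases h : i = i0
            · simpa [h] using (hcopy i).1
            · simpa [h] using (hcopy i).2 (huniq i h)
        _ = 2 * d + 1 := sum_if_eq d i0
    · push_neg at hex
      calc (∑ i : Fin d, ∑ p ∈ s.filter (fun p => p.1 = i), GdWeight d p)
          ≤ ∑ _i : Fin d, 2 := Finset.sum_le_sum (fun i _ => (hcopy i).2 (hex i))
        _ = 2 * d := by simp [mul_comm]
        _ ≤ 2 * d + 1 := Nat.le_succ _
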